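/- Let B be an n×n complex matrix with Jordan–Chevalley decomposition B = B_ss + B_nil where B² is semisimple (diagonalizable). Then B_nil² = 0 and B_ss·B_nil = B_nil·B_ss = 0. -/

import Mathlib

/-- If `B = s + n` is the Jordan–Chevalley decomposition
(`s` semisimple, `n` nilpotent, `s` and `n` commute) of an operator whose
square `B²` is semisimple (diagonalizable), then `n² = 0` and `s·n = n·s = 0`. -/
theorem stmt1 {V : Type*} [AddCommGroup V] [Module ℂ V] [FiniteDimensional ℂ V]
    (s n : Module.End ℂ V) (hcomm : Commute s n) (hs : s.IsSemisimple)
    (hn : IsNilpotent n)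
    (hsq : (((s + n) * (s + n)) : Module.End ℂ V).IsSemisimple) :
    n * n = 0 ∧ s * n = 0 ∧ n * s = 0 := by
  have hns : n * s = s * n := hcomm.symm
  -- The "nilpotent part" of B² :
  have hexp : (s + n) * (s + n) = s * s + (s * n + s * n + n * n) := by
    have h : (s + n) * (s + n) = s * s + (s * n + n * s + n * n) := by
      rw [add_mul, mul_add, mul_add]; abel
    rw [h, hns]
  -- N := s*n + s*n + n*n is nilpotent
  have hsn_nil : IsNilpotent (s * n) := hcomm.isNilpotent_mul_left hn
  have hnn_nil : IsNilpotent (n * n) := (Commute.refl n).isNilpotent_mul_right hn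
  have hcomm_sn_nn : Commute (s * n) (n * n) :=
    (hcomm.mul_right hcomm).mul_left ((Commute.refl n).mul_right (Commute.refl n)).symm.symm
  have hN_nil : IsNilpotent (s * n + s * n + n * n) := by
    have h2 : Commute (s * n + s * n) (n * n) := hcomm_sn_nn.add_left hcomm_sn_nn
    exact h2.isNilpotent_add
      ((Commute.refl (s * n)).isNilpotent_add hsn_nil hsn_nil) hnn_nil
  -- N is semisimple, being the difference of two commuting semisimple operators
  have hss : (s * s).IsSemisimple := by simpa [sq] using hs.pow 2
  have hBs : Commute (s + n) s := (Commute.refl s).add_left hcomm.symm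
  have hcB : Commute ((s + n) * (s + n)) (s * s) :=
    (hBs.mul_left hBs).mul_right (hBs.mul_left hBs)
  have hN_ss : (s * n + s * n + n * n).IsSemisimple := by
    have := hsq.sub_of_commute hcB hss
    rwa [hexp, add_sub_cancel_left] at this
  -- hence N = 0
  have hN0 : s * n + s * n + n * n = 0 :=
    Module.End.eq_zero_of_isNilpotent_isSemisimple hN_nil hN_ss
  -- so n² = (-2) • (s n)
  have key : n * n = (-2 : ℂ) • (s * n) := by
    have h : n * n = -(s * n + s * n) := by
      rw [eq_neg_iff_add_eq_zero, ← hN0]; abel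
    rw [h]; module
  -- inductively, n^(k+1) = (-2)^k • (s^k * n)
  have hpow : ∀ k : ℕ, n ^ (k + 1) = ((-2 : ℂ) ^ k) • (s ^ k * n) := by
    intro k
    induction k with
    | zero => simp
    | succ k ih =>
      have hcs : Commute n (s ^ k) := hcomm.symm.pow_right k
      calc n ^ (k + 1 + 1) = n * n ^ (k + 1) := by rw [pow_succ']
        _ = n * (((-2 : ℂ) ^ k) • (s ^ k * n)) := by rw [ih]
        _ = ((-2 : ℂ) ^ k) • (n * (s ^ k * n)) := by rw [mul_smul_comm]
        _ = ((-2 : ℂ) ^ k) • (s ^ k * (n * n)) := by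
          rw [← mul_assoc, hcs.eq, mul_assoc]
        _ = ((-2 : ℂ) ^ k) • (s ^ k * ((-2 : ℂ) • (s * n))) := by rw [key]
        _ = ((-2 : ℂ) ^ (k + 1)) • (s ^ (k + 1) * n) := by
          rw [mul_smul_comm, smul_smul, ← mul_assoc, ← pow_succ, ← pow_succ]
  -- hence s^m * n = 0 for some m
  obtain ⟨m, hm⟩ := hn
  have hsmn : s ^ m * n = 0 := by
    have h0 : n ^ (m + 1) = 0 := by rw [pow_succ, hm, zero_mul]
    rw [hpow m] at h0
    have h2 : ((-2 : ℂ) ^ m) ≠ 0 := pow_ne_zero _ (by norm_num)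
    exact (smul_eq_zero.mp h0).resolve_left h2
  -- the range of n is s-invariant; s restricted to it is semisimple and nilpotent
  set W : Submodule ℂ V := LinearMap.range n with hWdef
  have hW : ∀ x ∈ W, s x ∈ W := by
    intro x hx
    obtain ⟨v, rfl⟩ := hx
    exact ⟨s v, by rw [← Module.End.mul_apply, ← Module.End.mul_apply, hns]⟩
  have hres_ss : Module.End.IsSemisimple (s.restrict hW) := hs.restrict hW
  have hres_nil : IsNilpotent (s.restrict hW) := by
    refine ⟨m, ?_⟩
    rw [Module.End.pow_restrict m hW]
    ext ⟨x, hx⟩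
    obtain ⟨v, rfl⟩ := hx
    simp only [LinearMap.restrict_coe_apply, LinearMap.zero_apply, ZeroMemClass.coe_zero]
    rw [← Module.End.mul_apply, hsmn]
    rfl
  have hres0 : s.restrict hW = 0 :=
    Module.End.eq_zero_of_isNilpotent_isSemisimple hres_nil hres_ss
  -- conclude s * n = 0
  have hsn0 : s * n = 0 := by
    ext v
    have h1 : s.restrict hW ⟨n v, ⟨v, rfl⟩⟩ = 0 := by rw [hres0]; rfl
    have h2 := congrArg Subtype.val h1
    simpa [LinearMap.restrict_apply] using h2
  refine ⟨?_, hsn0, ?_⟩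
  · rw [key, hsn0, smul_zero]
  · rw [hns, hsn0]
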